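/- Let u be a word on {x,y}, μ(u)=[[p,q],[r,s]] with μ(x)=[[1,1],[0,1]], μ(y)=[[1,0],[1,1]], and let v = u·y^l·x for some l ∈ ℕ. Set A = μ(ᵗu·yy·u)_{22}, B = μ(ᵗu·yy·v)_{22}, C = μ(ᵗv·yy·u)_{22}, D = μ(ᵗv·yy·v)_{22}, where ᵗw denotes reversal composed with exchanging x and y. Then B − C = 2 and (A + D)^2 = (D − A)^2 + (B + C)^2, i.e. (A+D, D−A, B+C) is a Pythagorean triple. -/

import Mathlib

/-- The matrix `μ(x) = [[1,1],[0,1]]`. -/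
def muX : Matrix (Fin 2) (Fin 2) ℤ := !![1, 1; 0, 1]

/-- The matrix `μ(y) = [[1,0],[1,1]]`. -/
def muY : Matrix (Fin 2) (Fin 2) ℤ := !![1, 0; 1, 1]

/-- Words on the alphabet `{x, y}` are lists of booleans: `true` codes the
letter `x` and `false` codes the letter `y`. `mu` is the monoid homomorphism
sending a word to the corresponding product of the matrices `μ(x)`, `μ(y)`. -/
def mu (w : List Bool) : Matrix (Fin 2) (Fin 2) ℤ :=
  (w.map (fun b => if b then muX else muY)).prod

/-- The transpose of a word: reverse it and exchange the letters `x` and `y`. -/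
def wordTranspose (w : List Bool) : List Bool := w.reverse.map (fun b => !b)

open Matrix

lemma mu_append (a b : List Bool) : mu (a ++ b) = mu a * mu b := by
  simp [mu, List.map_append, List.prod_append]

lemma mu_cons (b : Bool) (w : List Bool) :
    mu (b :: w) = (if b then muX else muY) * mu w := by
  simp [mu]

lemma mu_transpose (w : List Bool) : mu (wordTranspose w) = (mu w)ᵀ := by
  induction w with
  | nil => simp [wordTranspose, mu, Matrix.transpose_one]
  | cons b t ih =>
      have h1 : wordTranspose (b :: t) = wordTranspose t ++ [!b] := by
        simp [wordTranspose]
      have h2 : mu [!b] = (if b then muX else muY)ᵀ := by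
        cases b <;>
          · ext i j
            fin_cases i <;> fin_cases j <;> simp [mu, muX, muY]
      rw [h1, mu_append, ih, h2, ← Matrix.transpose_mul, ← mu_cons]

lemma mu_replicate_false (l : ℕ) :
    mu (List.replicate l false) = !![1, 0; (l : ℤ), 1] := by
  induction l with
  | zero => simp [mu]; decide
  | succ n ih =>
      rw [List.replicate_succ, mu_cons, ih]
      simp only [if_neg (by decide : ¬ (false = true))]
      ext i j
      fin_cases i <;> fin_cases j <;>
        simp [muY, Matrix.mul_apply, Fin.sum_univ_two] <;> push_cast <;> ring

lemma mu_det (w : List Bool) : (mu w).det = 1 := by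
  induction w with
  | nil => simp [mu]
  | cons b t ih =>
      rw [mu_cons, Matrix.det_mul, ih]
      cases b <;> simp [muX, muY, Matrix.det_fin_two_of]

/-- Pythagorean triples in SL₂-tilings with frontier `ᵗs·yy·s`: with
`v = u·yˡ·x`, `A = μ(ᵗu·yy·u)₂₂`, `B = μ(ᵗu·yy·v)₂₂`, `C = μ(ᵗv·yy·u)₂₂`,
`D = μ(ᵗv·yy·v)₂₂`, one has `B − C = 2` and
`(A+D)² = (D−A)² + (B+C)²`. -/
theorem tiling_pythagorean_triple (u : List Bool) (l : ℕ) :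
    let v := u ++ List.replicate l false ++ [true]
    let A := mu (wordTranspose u ++ [false, false] ++ u) 1 1
    let B := mu (wordTranspose u ++ [false, false] ++ v) 1 1
    let C := mu (wordTranspose v ++ [false, false] ++ u) 1 1
    let D := mu (wordTranspose v ++ [false, false] ++ v) 1 1
    B - C = 2 ∧ (A + D) ^ 2 = (D - A) ^ 2 + (B + C) ^ 2 := by
  intro v A B C D
  set M := mu u with hM
  have hdet : M 0 0 * M 1 1 - M 0 1 * M 1 0 = 1 := by
    have := mu_det u
    rwa [Matrix.det_fin_two] at this
  have hyy : mu [false, false] = !![1, 0; 2, 1] := by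
    have : ([false, false] : List Bool) = List.replicate 2 false := rfl
    rw [this, mu_replicate_false]; norm_num
  have hx : mu [true] = muX := by simp [mu]
  have hv : mu v = M * !![1, 0; (l : ℤ), 1] * muX := by
    simp only [v, mu_append, mu_replicate_false, hx, hM, Matrix.mul_assoc]
  set p := M 0 0; set q := M 0 1; set r := M 1 0; set s := M 1 1
  have hvt : mu (wordTranspose v) = (mu v)ᵀ := mu_transpose v
  have hut : mu (wordTranspose u) = Mᵀ := mu_transpose u
  have hA : A = ((Mᵀ * !![1, 0; 2, 1] * M : Matrix (Fin 2) (Fin 2) ℤ)) 1 1 := by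
    simp only [A, mu_append, hut, hyy, hM]
  have hB : B = ((Mᵀ * !![1, 0; 2, 1] * mu v : Matrix (Fin 2) (Fin 2) ℤ)) 1 1 := by
    simp only [B, mu_append, hut, hyy]
  have hC : C = (((mu v)ᵀ * !![1, 0; 2, 1] * M : Matrix (Fin 2) (Fin 2) ℤ)) 1 1 := by
    simp only [C, mu_append, hvt, hyy, hM]
  have hD : D = (((mu v)ᵀ * !![1, 0; 2, 1] * mu v : Matrix (Fin 2) (Fin 2) ℤ)) 1 1 := by
    simp only [D, mu_append, hvt, hyy]
  have hA' : A = (q + s) ^ 2 := by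
    rw [hA]
    simp [Matrix.mul_apply, Fin.sum_univ_two, Matrix.transpose_apply, p, q, r, s]
    ring
  have hB' : B = (q + 2*s) * (p + q*(l+1)) + s * (r + s*(l+1)) := by
    rw [hB, hv]
    simp [Matrix.mul_apply, Fin.sum_univ_two, Matrix.transpose_apply, muX, Matrix.vecHead, Matrix.vecTail, p, q, r, s]
    ring
  have hC' : C = ((p + q*(l+1)) + 2*(r + s*(l+1))) * q + (r + s*(l+1)) * s := by
    rw [hC, hv]
    simp [Matrix.mul_apply, Fin.sum_univ_two, Matrix.transpose_apply, muX, Matrix.vecHead, Matrix.vecTail, p, q, r, s]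
    ring
  have hD' : D = ((p + q*(l+1)) + (r + s*(l+1))) ^ 2 := by
    rw [hD, hv]
    simp [Matrix.mul_apply, Fin.sum_univ_two, Matrix.transpose_apply, muX, Matrix.vecHead, Matrix.vecTail, p, q, r, s]
    ring
  constructor
  · rw [hB', hC']; linear_combination (2 : ℤ) * hdet
  · rw [hA', hB', hC', hD']; ring
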